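/- Property P4 (available budget formula): Suppose the cost sequence c satisfies the feasibility constraints for all rounds i' ≤ i−1 and additionally c_j ≥ (1−Δ)·ε/K for all rounds j with i−K+1 ≤ j ≤ i−1. Then the available budget in round i satisfies b_i = min( ε − Σ_{j=i−K+1}^{i−1} c_j , (1+Δ)·ε/K ), where b_i = min over k ∈ {1,…,K} of (B_k − Σ_{j=i−k+1}^{i−1} c_j). -/

import Mathlib

/-- Cumulative unlocked budget after a group has been active for `k` rounds:
`B_k = (ε/K)·((1+Δ)·min(k, K/2) + (1−Δ)·max(k − K/2, 0))`. -/
noncomputable def unlockedBudget (K : ℕ) (ε Δ : ℝ) (k : ℕ) : ℝ :=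
  (ε / K) * ((1 + Δ) * ((min k (K / 2) : ℕ) : ℝ) + (1 - Δ) * ((k - K / 2 : ℕ) : ℝ))

/-- A cost sequence is feasible up to round `m` if for every round `i' ≤ m` and
every age `k ∈ {1,…,K}` the total cost charged to the group of age `k` does not
exceed its unlocked budget. -/
def FeasibleUpTo (K : ℕ) (ε Δ : ℝ) (c : ℤ → ℝ) (m : ℤ) : Prop :=
  ∀ i : ℤ, i ≤ m → ∀ k : ℕ, 1 ≤ k → k ≤ K →
    ∑ j ∈ Finset.Icc (i - (k : ℤ) + 1) i, c j ≤ unlockedBudget K ε Δ k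
theorem stmt_12 (K : ℕ) (hK : Even K) (hK2 : 2 ≤ K) (ε Δ : ℝ) (hε : 0 < ε)
    (hΔ0 : 0 ≤ Δ) (hΔ1 : Δ ≤ 1) (c : ℤ → ℝ)
    (hpos : ∀ j : ℤ, 0 ≤ c j) (hzero : ∀ j : ℤ, j ≤ 0 → c j = 0)
    (i : ℤ) (hi : 1 ≤ i) (hfeas : FeasibleUpTo K ε Δ c (i - 1))
    (hlow : ∀ j : ℤ, i - K + 1 ≤ j → j ≤ i - 1 → (1 - Δ) * ε / K ≤ c j) :
    (Finset.Icc 1 K).inf' (Finset.nonempty_Icc.mpr (by omega))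
        (fun k => unlockedBudget K ε Δ k
          - ∑ j ∈ Finset.Icc (i - (k : ℤ) + 1) (i - 1), c j)
      = min (ε - ∑ j ∈ Finset.Icc (i - (K : ℤ) + 1) (i - 1), c j)
          ((1 + Δ) * ε / K) := by
  obtain ⟨h, hKh⟩ := hK
  have hKh' : K = 2 * h := by omega
  have hh1 : 1 ≤ h := by omega
  have hK0 : (0:ℝ) < (K:ℝ) := by positivity
  have hh2 : K / 2 = h := by omega
  have hKR : (K:ℝ) = 2 * h := by exact_mod_cast congrArg (Nat.cast : ℕ → ℝ) hKh'
  -- budget values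
  have hB1 : unlockedBudget K ε Δ 1 = (1 + Δ) * ε / K := by
    unfold unlockedBudget
    rw [hh2]
    rw [show min 1 h = 1 by omega, show 1 - h = 0 by omega]
    push_cast
    ring
  have hBK : unlockedBudget K ε Δ K = ε := by
    unfold unlockedBudget
    rw [hh2, show min K h = h by omega, show K - h = h by omega]
    rw [div_mul_eq_mul_div, div_eq_iff (ne_of_gt hK0)]
    rw [hKR]; ring
  have hBlow : ∀ k : ℕ, k ≤ h → unlockedBudget K ε Δ k = (ε / K) * ((1 + Δ) * k) := by
    intro k hk
    unfold unlockedBudget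
    rw [hh2, show min k h = k by omega, show k - h = 0 by omega]
    push_cast; ring
  have hBhigh : ∀ k : ℕ, h ≤ k → k ≤ K →
      ε - unlockedBudget K ε Δ k = ((K:ℝ) - k) * ((1 - Δ) * ε / K) := by
    intro k hk hkK
    unfold unlockedBudget
    rw [hh2, show min k h = h by omega]
    rw [show ((k - h : ℕ) : ℝ) = (k:ℝ) - h by push_cast [hk]; ring]
    field_simp
    rw [hKR]; ring
  -- per-round upper bound on costs
  have hc_ub : ∀ j : ℤ, j ≤ i - 1 → c j ≤ (1 + Δ) * ε / K := by
    intro j hj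
    have := hfeas j hj 1 le_rfl (by omega)
    rw [hB1] at this
    simpa [show j - (1:ℤ) + 1 = j by ring] using this
  have hIoc : ∀ a b : ℤ, Finset.Icc (a + 1) b = Finset.Ioc a b := by
    intro a b; ext x; simp [Int.add_one_le_iff]
  apply le_antisymm
  · apply le_min
    · have := Finset.inf'_le
        (f := fun k => unlockedBudget K ε Δ k
          - ∑ j ∈ Finset.Icc (i - (k : ℤ) + 1) (i - 1), c j)
        (Finset.mem_Icc.mpr ⟨by omega, le_rfl⟩ : K ∈ Finset.Icc 1 K)
      simp only [hBK] at this; exact this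
    · have := Finset.inf'_le
        (f := fun k => unlockedBudget K ε Δ k
          - ∑ j ∈ Finset.Icc (i - (k : ℤ) + 1) (i - 1), c j)
        (Finset.mem_Icc.mpr ⟨le_rfl, by omega⟩ : 1 ∈ Finset.Icc 1 K)
      have hempty : Finset.Icc (i - ((1:ℕ):ℤ) + 1) (i - 1) = ∅ :=
        Finset.Icc_eq_empty (by omega)
      rw [hempty] at this
      simp only [hB1, Finset.sum_empty, sub_zero] at this; exact this
  · apply Finset.le_inf'
    intro k hk
    simp only [Finset.mem_Icc] at hk
    obtain ⟨hk1, hkK⟩ := hk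
    by_cases hkh : k ≤ h
    · refine le_trans (min_le_right _ _) ?_
      rw [hBlow k hkh]
      have hcard : (Finset.Icc (i - (k:ℤ) + 1) (i - 1)).card = k - 1 := by
        rw [Int.card_Icc]; omega
      have hsum : ∑ j ∈ Finset.Icc (i - (k:ℤ) + 1) (i - 1), c j
          ≤ (Finset.Icc (i - (k:ℤ) + 1) (i - 1)).card • ((1 + Δ) * ε / K) := by
        apply Finset.sum_le_card_nsmul
        intro j hj
        simp only [Finset.mem_Icc] at hj
        exact hc_ub j hj.2
      rw [hcard, nsmul_eq_mul] at hsum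
      have hck : ((k - 1 : ℕ) : ℝ) = (k:ℝ) - 1 := by push_cast [hk1]; ring
      rw [hck] at hsum
      have hid : ε / (K:ℝ) * ((1 + Δ) * k)
          = (1 + Δ) * ε / K + ((k:ℝ) - 1) * ((1 + Δ) * ε / K) := by ring
      linarith
    · push_neg at hkh
      have hkh' : h ≤ k := by omega
      refine le_trans (min_le_left _ _) ?_
      have hsplit : (∑ j ∈ Finset.Ioc (i - (K:ℤ)) (i - (k:ℤ)), c j)
          + (∑ j ∈ Finset.Ioc (i - (k:ℤ)) (i - 1), c j)
          = ∑ j ∈ Finset.Ioc (i - (K:ℤ)) (i - 1), c j := by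
        have hdisj : Disjoint (Finset.Ioc (i - (K:ℤ)) (i - (k:ℤ)))
            (Finset.Ioc (i - (k:ℤ)) (i - 1)) := by
          rw [Finset.disjoint_left]
          intro x hx hx'
          simp only [Finset.mem_Ioc] at hx hx'
          omega
        rw [← Finset.sum_union hdisj,
          Finset.Ioc_union_Ioc_eq_Ioc (by omega) (by omega)]
      have hlb : ((K - k : ℕ) : ℝ) * ((1 - Δ) * ε / K)
          ≤ ∑ j ∈ Finset.Ioc (i - (K:ℤ)) (i - (k:ℤ)), c j := by
        have hcard : (Finset.Ioc (i - (K:ℤ)) (i - (k:ℤ))).card = K - k := by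
          rw [Int.card_Ioc]; omega
        have := Finset.card_nsmul_le_sum (Finset.Ioc (i - (K:ℤ)) (i - (k:ℤ))) c
          ((1 - Δ) * ε / K) (by
            intro j hj
            simp only [Finset.mem_Ioc] at hj
            exact hlow j (by omega) (by omega))
        rwa [hcard, nsmul_eq_mul] at this
      have hrw1 : Finset.Icc (i - (K:ℤ) + 1) (i - 1) = Finset.Ioc (i - (K:ℤ)) (i - 1) :=
        hIoc _ _
      have hrw2 : Finset.Icc (i - (k:ℤ) + 1) (i - 1) = Finset.Ioc (i - (k:ℤ)) (i - 1) :=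
        hIoc _ _
      rw [hrw1, hrw2]
      have hEB := hBhigh k hkh' hkK
      have hcast : ((K - k : ℕ) : ℝ) = (K:ℝ) - k := by push_cast [hkK]; ring
      rw [hcast] at hlb
      linarith [hsplit, hlb, hEB]
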